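/- Let R be a commutative Noetherian ring with an element π, and let A be an R-algebra such that A/πA is Noetherian. Then the π-adic completion of A is Noetherian. -/

import Mathlib

variable {R : Type*} [CommRing R] {A : Type*} [Ring A] [Algebra R A]

/-- The ring congruence on `A` identifying elements that differ by a multiple of a
central element `z` (so the quotient is `A/zA`). -/
def modCon (z : A) (hz : ∀ a : A, a * z = z * a) : RingCon A where
  r a b := ∃ x : A, a - b = z * x
  iseqv := by
    refine ⟨fun a => ⟨0, by simp⟩, ?_, ?_⟩
    · rintro a b ⟨x, hx⟩
      exact ⟨-x, by rw [mul_neg, ← hx]; abel⟩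
    · rintro a b c ⟨x, hx⟩ ⟨y, hy⟩
      exact ⟨x + y, by rw [mul_add, ← hx, ← hy]; abel⟩
  add' := by
    rintro a b c d ⟨x, hx⟩ ⟨y, hy⟩
    exact ⟨x + y, by rw [mul_add, ← hx, ← hy]; abel⟩
  mul' := by
    rintro a b c d ⟨x, hx⟩ ⟨y, hy⟩
    refine ⟨x * c + b * y, ?_⟩
    have h1 : z * (x * c + b * y) = (a - b) * c + b * (c - d) := by
      rw [mul_add, ← mul_assoc, ← hx, ← mul_assoc, ← hz b, mul_assoc, ← hy]
    rw [h1]; noncomm_ring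

/-- The `π`-adic completion of the `R`-algebra `A`, realized as the inverse limit of the
quotient rings `A/πⁿA`: the subring of the product `Π n, A/πⁿA` consisting of the
coherent families. -/
def piAdicCompletion (π : R) :
    Subring (∀ n : ℕ,
      (modCon (algebraMap R A (π ^ n)) fun a => (Algebra.commutes (π ^ n) a).symm).Quotient) where
  carrier := {f | ∀ n : ℕ, ∃ a : A, ∀ m, m ≤ n → f m = (a : _)}
  one_mem' := fun n => ⟨1, fun m _ => rfl⟩
  zero_mem' := fun n => ⟨0, fun m _ => rfl⟩
  mul_mem' := by
    intro f g hf hg n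
    obtain ⟨a, ha⟩ := hf n
    obtain ⟨b, hb⟩ := hg n
    exact ⟨a * b, fun m hm => by rw [Pi.mul_apply, ha m hm, hb m hm]; rfl⟩
  add_mem' := by
    intro f g hf hg n
    obtain ⟨a, ha⟩ := hf n
    obtain ⟨b, hb⟩ := hg n
    exact ⟨a + b, fun m hm => by rw [Pi.add_apply, ha m hm, hb m hm]; rfl⟩
  neg_mem' := by
    intro f hf n
    obtain ⟨a, ha⟩ := hf n
    exact ⟨-a, fun m hm => by rw [Pi.neg_apply, ha m hm]; rfl⟩

set_option maxHeartbeats 2000000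
set_option synthInstance.maxHeartbeats 400000
namespace Berthelot
variable {R : Type*} [CommRing R] {A : Type*} [Ring A] [Algebra R A]

lemma modCon_coe_eq_zero {z : A} {hz : ∀ a : A, a * z = z * a} {a : A} :
    (a : (modCon z hz).Quotient) = 0 ↔ ∃ x, a = z * x := by
  rw [← (modCon z hz).coe_zero, (modCon z hz).eq]
  show (∃ x, a - 0 = z * x) ↔ _
  simp [sub_zero]

lemma modCon_coe_eq {z : A} {hz : ∀ a : A, a * z = z * a} {a b : A} :
    (a : (modCon z hz).Quotient) = (b : _) ↔ ∃ x, a - b = z * x := (modCon z hz).eq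

variable (π : R)

/-- The component quotient ring `A/π^m A`. -/
abbrev Qcomp (m : ℕ) :=
  (modCon (algebraMap R A (π ^ m)) fun a => (Algebra.commutes (π ^ m) a).symm).Quotient

/-- The projection `A → A/π^m A`. -/
def cmk (m : ℕ) (a : A) : Qcomp (A := A) π m := (a : _)

lemma cmk_surjective (m : ℕ) (q : Qcomp (A := A) π m) : ∃ x : A, q = cmk π m x := by
  induction q using Quotient.inductionOn' with
  | h x => exact ⟨x, rfl⟩

lemma cmk_mul (m : ℕ) (a b : A) : cmk π m (a * b) = cmk π m a * cmk π m b := rfl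

lemma cmk_eq_zero_iff {m : ℕ} {a : A} :
    cmk π m a = 0 ↔ ∃ x, a = algebraMap R A (π ^ m) * x := modCon_coe_eq_zero

lemma cmk_eq_iff {m : ℕ} {a b : A} :
    cmk π m a = cmk π m b ↔ ∃ x, a - b = algebraMap R A (π ^ m) * x := modCon_coe_eq

/-- The constant-family embedding `A →+* B`. -/
def psi : A →+* piAdicCompletion (A := A) π where
  toFun a := ⟨fun _ => (a : _), fun _ => ⟨a, fun _ _ => rfl⟩⟩
  map_one' := rfl
  map_mul' a b := rfl
  map_zero' := rfl
  map_add' a b := rfl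

@[simp] lemma psi_coe (a : A) (m : ℕ) : (psi π a).val m = (a : _) := rfl

/-- the element π in B -/
def Pel : piAdicCompletion (A := A) π := psi π (algebraMap R A π)

lemma coe_central {c : RingCon A} {z : A} (hz : ∀ a : A, a * z = z * a) (q : c.Quotient) :
    (z : c.Quotient) * q = q * (z : c.Quotient) := by
  induction q using Quotient.inductionOn' with
  | h x =>
    rw [show (Quotient.mk'' x : c.Quotient) = (x : c.Quotient) from rfl,
      ← RingCon.coe_mul, ← RingCon.coe_mul, hz]

lemma Pel_comm (b : piAdicCompletion (A := A) π) : Pel π * b = b * Pel π := by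
  apply Subtype.ext
  funext n
  show (Pel π).val n * b.val n = b.val n * (Pel π).val n
  exact coe_central (fun a => (Algebra.commutes π a).symm) (b.val n)

lemma Pel_pow (n : ℕ) : (Pel π) ^ n = psi π (algebraMap R A (π ^ n)) := by
  rw [Pel, ← map_pow, ← map_pow]

end Berthelot
namespace Berthelot
variable {R : Type*} [CommRing R] {A : Type*} [Ring A] [Algebra R A] (π : R)

/-- `Kp n f` means `f` vanishes in all components `≤ n`. -/
def Kp (n : ℕ) (f : piAdicCompletion (A := A) π) : Prop := ∀ m ≤ n, f.val m = 0

variable {π}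

lemma Kp.mono {n n' : ℕ} {f : piAdicCompletion (A := A) π} (h : Kp π n f) (hle : n' ≤ n) :
    Kp π n' f := fun m hm => h m (hm.trans hle)

lemma Kp.zero (n : ℕ) : Kp π n (0 : piAdicCompletion (A := A) π) := fun _ _ => rfl

lemma Kp.add {n : ℕ} {f g : piAdicCompletion (A := A) π} (hf : Kp π n f) (hg : Kp π n g) :
    Kp π n (f + g) := fun m hm => by
  show f.val m + g.val m = 0
  rw [hf m hm, hg m hm, add_zero]

lemma Kp.neg {n : ℕ} {f : piAdicCompletion (A := A) π} (hf : Kp π n f) : Kp π n (-f) :=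
  fun m hm => by
  show -(f.val m) = 0
  rw [hf m hm, neg_zero]

lemma Kp.sub {n : ℕ} {f g : piAdicCompletion (A := A) π} (hf : Kp π n f) (hg : Kp π n g) :
    Kp π n (f - g) := by
  rw [sub_eq_add_neg]; exact hf.add hg.neg

lemma Kp.mul_left {n : ℕ} {f : piAdicCompletion (A := A) π} (hf : Kp π n f)
    (b : piAdicCompletion (A := A) π) : Kp π n (b * f) := fun m hm => by
  show b.val m * f.val m = 0
  rw [hf m hm, mul_zero]

lemma Kp.mul_right {n : ℕ} {f : piAdicCompletion (A := A) π} (hf : Kp π n f)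
    (b : piAdicCompletion (A := A) π) : Kp π n (f * b) := fun m hm => by
  show f.val m * b.val m = 0
  rw [hf m hm, zero_mul]

lemma Kp.sum {n : ℕ} {ι : Type*} {s : Finset ι} {F : ι → piAdicCompletion (A := A) π}
    (h : ∀ i ∈ s, Kp π n (F i)) : Kp π n (∑ i ∈ s, F i) := by
  classical
  induction s using Finset.induction_on with
  | empty => simpa using Kp.zero n
  | @insert a s hx ih =>
    rw [Finset.sum_insert hx]
    exact (h _ (Finset.mem_insert_self _ _)).add
      (ih fun i hi => h i (Finset.mem_insert_of_mem hi))

lemma eq_of_forall_Kp {f g : piAdicCompletion (A := A) π} (h : ∀ n, Kp π n (f - g)) : f = g := by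
  apply Subtype.ext; funext m
  have := h m m le_rfl
  have h2 : f.val m - g.val m = 0 := this
  rw [sub_eq_zero] at h2; exact h2

/-- the easy direction: `πⁿ·B ⊆ K n`. -/
lemma Kp_pow_mul (n : ℕ) (b : piAdicCompletion (A := A) π) : Kp π n (Pel π ^ n * b) := by
  intro m hm
  show (Pel π ^ n).val m * b.val m = 0
  have h1 : (Pel π ^ n).val m = cmk π m (algebraMap R A (π ^ n)) := by
    rw [Pel_pow]; rfl
  obtain ⟨x, hx⟩ := cmk_surjective π m (b.val m)
  rw [h1, hx, ← cmk_mul, cmk_eq_zero_iff]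
  refine ⟨algebraMap R A (π ^ (n - m)) * x, ?_⟩
  rw [← mul_assoc, ← map_mul, ← pow_add]
  congr 3
  omega

end Berthelot
namespace Berthelot
variable {R : Type*} [CommRing R] {A : Type*} [Ring A] [Algebra R A] {π : R}

lemma coherent (f : piAdicCompletion (A := A) π) :
    ∀ j : ℕ, ∃ a : A, ∀ m ≤ j, f.val m = cmk π m a := f.2

/-- The hard direction (Stacks 05GG-style): an element of the completion vanishing in
components `≤ n` is divisible by `πⁿ`. -/
lemma Kp.exists_pow_mul {n : ℕ} {f : piAdicCompletion (A := A) π} (hf : Kp π n f) :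
    ∃ g : piAdicCompletion (A := A) π, f = Pel π ^ n * g := by
  classical
  choose a ha using coherent f
  -- a n ∈ π^n A
  have h0 : ∃ e0, a n = algebraMap R A (π ^ n) * e0 := by
    rw [← cmk_eq_zero_iff (π := π), ← ha n n le_rfl]
    exact hf n le_rfl
  obtain ⟨e0, he0⟩ := h0
  -- successive differences
  have hδ : ∀ j : ℕ, ∃ e, a (j + 1) - a j = algebraMap R A (π ^ j) * e := by
    intro j
    rw [← cmk_eq_iff (π := π), ← ha (j + 1) j (Nat.le_succ j), ← ha j j le_rfl]
  choose e he using hδ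
  -- partial sums of the quotient series
  set E : ℕ → A := fun m => e0 + ∑ i ∈ Finset.range m, algebraMap R A (π ^ i) * e (n + i)
    with hE
  -- telescoping
  have htel : ∀ m, algebraMap R A (π ^ n) * E m = a (n + m) := by
    intro m
    induction m with
    | zero => simpa [hE, map_pow] using he0.symm
    | succ m ih =>
      have hstep : E (m + 1) = E m + algebraMap R A (π ^ m) * e (n + m) := by
        rw [hE]; simp [Finset.sum_range_succ, add_assoc]
      have hn : n + (m + 1) = (n + m) + 1 := by omega
      rw [hstep, mul_add, ih, ← mul_assoc, ← map_mul, ← pow_add, hn, ← he (n + m)]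
      abel
  -- E is coherent
  have hEcoh : ∀ N : ℕ, ∀ m ≤ N, cmk π m (E m) = cmk π m (E N) := by
    intro N m hm
    rw [cmk_eq_iff]
    refine ⟨-∑ i ∈ Finset.Ico m N, algebraMap R A (π ^ (i - m)) * e (n + i), ?_⟩
    have : E N - E m = ∑ i ∈ Finset.Ico m N, algebraMap R A (π ^ i) * e (n + i) := by
      rw [hE]
      simp only [add_sub_add_left_eq_sub]
      rw [Finset.sum_Ico_eq_sub _ hm]
    have h2 : ∑ i ∈ Finset.Ico m N, algebraMap R A (π ^ i) * e (n + i)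
        = algebraMap R A (π ^ m) * ∑ i ∈ Finset.Ico m N, algebraMap R A (π ^ (i - m)) * e (n + i) := by
      rw [Finset.mul_sum]
      refine Finset.sum_congr rfl fun i hi => ?_
      rw [← mul_assoc, ← map_mul, ← pow_add]
      congr 3
      exact (Nat.add_sub_cancel' (Finset.mem_Ico.mp hi).1).symm
    rw [mul_neg, ← h2, ← this]
    abel
  refine ⟨⟨fun m => cmk π m (E m), fun N => ⟨E N, fun m hm => hEcoh N m hm⟩⟩, ?_⟩
  apply Subtype.ext
  funext m
  show f.val m = (Pel π ^ n).val m * cmk π m (E m)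
  have h1 : (Pel π ^ n).val m = cmk π m (algebraMap R A (π ^ n)) := by rw [Pel_pow]; rfl
  rw [h1, ← cmk_mul, htel m, ha (n + m) m (by omega)]

end Berthelot
namespace Berthelot
variable {R : Type*} [CommRing R] {A : Type*} [Ring A] [Algebra R A] {π : R}

lemma Kp.of_le {m n : ℕ} (u : ℕ → piAdicCompletion (A := A) π)
    (h : ∀ j, Kp π j (u (j + 1) - u j)) (hmn : m ≤ n) : Kp π m (u n - u m) := by
  obtain ⟨k, rfl⟩ := Nat.exists_eq_add_of_le hmn
  induction k with
  | zero => simpa [sub_self] using Kp.zero m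
  | succ k ih =>
    have : u (m + (k + 1)) - u m = (u ((m + k) + 1) - u (m + k)) + (u (m + k) - u m) := by
      rw [← Nat.add_assoc]; abel
    rw [this]
    exact ((h (m + k)).mono (by omega)).add (ih (by omega))

/-- Completeness of `B`: a Cauchy sequence has a limit. -/
lemma complete (u : ℕ → piAdicCompletion (A := A) π)
    (h : ∀ j, Kp π j (u (j + 1) - u j)) :
    ∃ U : piAdicCompletion (A := A) π, ∀ n, Kp π n (U - u n) := by
  have hdiff : ∀ m n : ℕ, m ≤ n → (u n).val m = (u m).val m := by
    intro m n hmn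
    have := Kp.of_le u h hmn m le_rfl
    have h2 : (u n).val m - (u m).val m = 0 := this
    rw [sub_eq_zero] at h2; exact h2
  refine ⟨⟨fun m => (u m).val m, ?_⟩, ?_⟩
  · intro N
    obtain ⟨b, hb⟩ := coherent (u N) N
    exact ⟨b, fun m hm => by
      show (u m).val m = _
      rw [← hdiff m N hm]; exact hb m hm⟩
  · intro n m hm
    show (u m).val m - (u n).val m = 0
    rw [hdiff m n hm, sub_self]

end Berthelot
namespace Berthelot
variable {R : Type*} [CommRing R] {A : Type*} [Ring A] [Algebra R A] (π : R)

/-- The level-one quotient `A/πA` from the theorem statement. -/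
abbrev QA := (modCon (algebraMap R A π) fun a => (Algebra.commutes π a).symm).Quotient

/-- Projection `A → A/πA`. -/
def mkQ (a : A) : QA (A := A) π := (a : _)

variable {π}

lemma mkQ_surjective (q : QA (A := A) π) : ∃ a : A, q = mkQ π a := by
  induction q using Quotient.inductionOn' with
  | h x => exact ⟨x, rfl⟩

lemma mkQ_eq_iff {a b : A} : mkQ π a = mkQ π b ↔ ∃ x, a - b = algebraMap R A π * x :=
  modCon_coe_eq

lemma mkQ_mul (a b : A) : mkQ π (a * b) = mkQ π a * mkQ π b := rfl
lemma mkQ_add (a b : A) : mkQ π (a + b) = mkQ π a + mkQ π b := rfl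
lemma mkQ_zero : mkQ π (0 : A) = 0 := rfl

lemma Kp_one_pi_mul (x : A) : Kp π 1 (psi π (algebraMap R A π * x)) := by
  have : psi π (algebraMap R A π * x) = Pel π ^ 1 * psi π x := by
    rw [pow_one, Pel, ← map_mul]
  rw [this]
  exact Kp_pow_mul 1 (psi π x)

lemma Kp_one_of_mkQ_eq {a b : A} (h : mkQ π a = mkQ π b) :
    Kp π 1 (psi π a - psi π b) := by
  obtain ⟨x, hx⟩ := mkQ_eq_iff.mp h
  have : psi π a - psi π b = psi π (algebraMap R A π * x) := by
    rw [← hx, RingHom.map_sub]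
  rw [this]
  exact Kp_one_pi_mul x

lemma Pel_pow_comm (k : ℕ) (b : piAdicCompletion (A := A) π) :
    Pel π ^ k * b = b * Pel π ^ k := by
  induction k with
  | zero => rw [pow_zero, one_mul, mul_one]
  | succ k ih => rw [pow_succ, mul_assoc, Pel_comm π b, ← mul_assoc, ih, mul_assoc]

end Berthelot
namespace Berthelot
variable {R : Type*} [CommRing R] {A : Type*} [Ring A] [Algebra R A] (π : R)

/-- The ideal of approximate leading coefficients of `J` at level `k`. -/
def L (J : Ideal (piAdicCompletion (A := A) π)) (k : ℕ) :
    Submodule (QA (A := A) π) (QA (A := A) π) where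
  carrier := {q | ∃ (a : A) (y : piAdicCompletion (A := A) π),
    mkQ π a = q ∧ Pel π ^ k * y ∈ J ∧ Kp π 1 (y - psi π a)}
  zero_mem' := by
    refine ⟨(0 : A), 0, mkQ_zero, ?_, ?_⟩
    · rw [mul_zero]; exact J.zero_mem
    · have : (0 : piAdicCompletion (A := A) π) - psi π 0 = 0 := by
        rw [map_zero, sub_zero]
      rw [this]; exact Kp.zero 1
  add_mem' := by
    rintro q q' ⟨a, y, rfl, hy, hk⟩ ⟨a', y', rfl, hy', hk'⟩
    refine ⟨a + a', y + y', mkQ_add a a', ?_, ?_⟩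
    · rw [mul_add]; exact J.add_mem hy hy'
    · have : y + y' - psi π (a + a') = (y - psi π a) + (y' - psi π a') := by
        rw [RingHom.map_add]; abel
      rw [this]; exact hk.add hk'
  smul_mem' := by
    rintro c q ⟨a, y, rfl, hy, hk⟩
    obtain ⟨cc, rfl⟩ := mkQ_surjective c
    refine ⟨cc * a, psi π cc * y, ?_, ?_, ?_⟩
    · rw [smul_eq_mul, mkQ_mul]
    · have h2 : Pel π ^ k * (psi π cc * y) = psi π cc * (Pel π ^ k * y) := by
        rw [← mul_assoc, Pel_pow_comm k (psi π cc), mul_assoc]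
      rw [h2]
      exact J.smul_mem (psi π cc) hy
    · have : psi π cc * y - psi π (cc * a) = psi π cc * (y - psi π a) := by
        rw [map_mul, mul_sub]
      rw [this]; exact hk.mul_left _

variable {π}

lemma L_mono (J : Ideal (piAdicCompletion (A := A) π)) : Monotone (L π J) := by
  intro k k' hkk'
  obtain ⟨d, rfl⟩ := Nat.exists_eq_add_of_le hkk'
  rintro q ⟨a, y, rfl, hy, hk⟩
  refine ⟨a, y, rfl, ?_, hk⟩
  have h2 : Pel π ^ (k + d) * y = Pel π ^ d * (Pel π ^ k * y) := by
    rw [← mul_assoc, ← pow_add, Nat.add_comm]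
  rw [h2]
  exact J.smul_mem (Pel π ^ d) hy

/-- Lifting a span membership in `A/πA` to an honest `A`-linear combination. -/
lemma span_lift {ι : Type*} (s : Finset ι) (F : ι → A) {q : QA (A := A) π}
    (hq : q ∈ Submodule.span (QA (A := A) π) ((fun i => mkQ π (F i)) '' ↑s)) :
    ∃ co : ι → A, q = mkQ π (∑ i ∈ s, co i * F i) := by
  classical
  induction hq using Submodule.span_induction with
  | mem x hx =>
    obtain ⟨i, hi, rfl⟩ := hx
    refine ⟨fun j => if j = i then 1 else 0, ?_⟩
    have : ∑ j ∈ s, (if j = i then (1 : A) else 0) * F j = F i := by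
      rw [Finset.sum_congr rfl (fun j _ => by rw [ite_mul, one_mul, zero_mul])]
      rw [Finset.sum_ite_eq' s i F, if_pos (Finset.mem_coe.mp hi)]
    rw [this]
  | zero =>
    refine ⟨0, ?_⟩
    have : ∑ i ∈ s, (0 : ι → A) i * F i = 0 := by simp
    rw [this, mkQ_zero]
  | add x y hx hy ihx ihy =>
    obtain ⟨co, rfl⟩ := ihx
    obtain ⟨co', rfl⟩ := ihy
    refine ⟨co + co', ?_⟩
    rw [← mkQ_add]
    congr 1
    rw [← Finset.sum_add_distrib]
    exact Finset.sum_congr rfl fun i _ => by rw [Pi.add_apply, add_mul]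
  | smul r x hx ihx =>
    obtain ⟨co, rfl⟩ := ihx
    obtain ⟨rc, rfl⟩ := mkQ_surjective r
    refine ⟨fun i => rc * co i, ?_⟩
    rw [smul_eq_mul, ← mkQ_mul, Finset.mul_sum]
    congr 1
    exact Finset.sum_congr rfl fun i _ => by rw [mul_assoc]

end Berthelot
namespace Berthelot

lemma nat_rec_choice {α : Type*} (P : ℕ → α → Prop) (Q : ℕ → α → α → Prop) (a0 : α)
    (h0 : P 0 a0) (hstep : ∀ n a, P n a → ∃ a', P (n + 1) a' ∧ Q n a a') :
    ∃ u : ℕ → α, u 0 = a0 ∧ (∀ n, P n (u n)) ∧ ∀ n, Q n (u n) (u (n + 1)) := by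
  choose f hf1 hf2 using hstep
  let u : ∀ _ : ℕ, {a : α // P _ a} := fun n =>
    Nat.rec (motive := fun n => {a : α // P n a}) ⟨a0, h0⟩
      (fun n p => ⟨f n p.1 p.2, hf1 n p.1 p.2⟩) n
  exact ⟨fun n => (u n).1, rfl, fun n => (u n).2, fun n => hf2 n (u n).1 (u n).2⟩

end Berthelot
namespace Berthelot
variable {R : Type*} [CommRing R] {A : Type*} [Ring A] [Algebra R A] {π : R}

lemma ideal_fg (hmod : IsNoetherianRing (QA (A := A) π))
    (J : Ideal (piAdicCompletion (A := A) π)) : J.FG := by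
  classical
  haveI := hmod
  obtain ⟨N, hN⟩ := monotone_stabilizes_iff_noetherian.mpr hmod ⟨L π J, L_mono J⟩
  have hfg : ∀ k, (L π J k).FG := fun k => IsNoetherian.noetherian _
  choose sQ hsQ using hfg
  have hw : ∀ k, ∀ q : {x // x ∈ sQ k}, ∃ (a : A) (y : piAdicCompletion (A := A) π),
      mkQ π a = q.1 ∧ Pel π ^ k * y ∈ J ∧ Kp π 1 (y - psi π a) := by
    intro k q
    have : q.1 ∈ L π J k := by rw [← hsQ k]; exact Submodule.subset_span q.2
    exact this
  choose wa wy hwa hwy hwk using hw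
  set T : Finset (ℕ × A × piAdicCompletion (A := A) π) :=
    (Finset.range (N + 1)).biUnion
      (fun k => (sQ k).attach.image fun q => (k, wa k q, wy k q)) with hT_def
  set gen : ℕ × A × piAdicCompletion (A := A) π → piAdicCompletion (A := A) π :=
    fun τ => Pel π ^ τ.1 * τ.2.2 with hgen_def
  have hT : ∀ τ ∈ T, τ.1 ≤ N ∧ gen τ ∈ J ∧ Kp π 1 (τ.2.2 - psi π τ.2.1) := by
    intro τ hτ
    rw [hT_def, Finset.mem_biUnion] at hτ
    obtain ⟨k, hk, hτ⟩ := hτ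
    rw [Finset.mem_image] at hτ
    obtain ⟨q, _, rfl⟩ := hτ
    exact ⟨by simpa using Nat.lt_succ_iff.mp (Finset.mem_range.mp hk),
      hwy k q, hwk k q⟩
  have hTspan : ∀ k ≤ N, L π J k ≤ Submodule.span (QA (A := A) π)
      ((fun τ : ℕ × A × piAdicCompletion (A := A) π => mkQ π τ.2.1) ''
        ↑(T.filter fun τ => τ.1 = k)) := by
    intro k hk
    rw [← hsQ k, Submodule.span_le]
    intro q hq
    have hq' : q ∈ sQ k := Finset.mem_coe.mp hq
    refine Submodule.subset_span ⟨(k, wa k ⟨q, hq'⟩, wy k ⟨q, hq'⟩), ?_, hwa k ⟨q, hq'⟩⟩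
    rw [Finset.coe_filter]
    refine ⟨?_, rfl⟩
    rw [hT_def, Finset.mem_biUnion]
    exact ⟨k, Finset.mem_range.mpr (by omega),
      Finset.mem_image.mpr ⟨⟨q, hq'⟩, Finset.mem_attach _ _, rfl⟩⟩
  -- generators are in J
  have hgenJ : ∀ c : ℕ × A × piAdicCompletion (A := A) π → piAdicCompletion (A := A) π,
      (∑ τ ∈ T, c τ * gen τ) ∈ J := by
    intro c
    refine Submodule.sum_mem J fun τ hτ => J.smul_mem (c τ) (hT τ hτ).2.1
  refine ⟨T.image gen, le_antisymm ?_ ?_⟩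
  · rw [Ideal.span_le]
    intro x hx
    obtain ⟨τ, hτ, rfl⟩ := Finset.mem_image.mp (Finset.mem_coe.mp hx)
    exact (hT τ hτ).2.1
  · intro j hj
    -- the invariant
    set Inv : ℕ → (ℕ × A × piAdicCompletion (A := A) π → piAdicCompletion (A := A) π)
        → Prop := fun n c => ∃ y, j - ∑ τ ∈ T, c τ * gen τ = Pel π ^ n * y with hInv_def
    have step : ∀ n c, Inv n c → ∃ c', Inv (n + 1) c' ∧
        ∀ τ, Kp π (n - N) (c' τ - c τ) := by
      intro n c hc
      obtain ⟨y, hy⟩ := hc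
      set k := min n N with hk_def
      have hkN : k ≤ N := min_le_right n N
      have hkn : k ≤ n := min_le_left n N
      have hyJ : Pel π ^ n * y ∈ J := by
        rw [← hy]; exact J.sub_mem hj (hgenJ c)
      obtain ⟨ay, hay⟩ := coherent y 1
      have hKp1 : Kp π 1 (y - psi π ay) := by
        intro m hm
        show y.val m - cmk π m ay = 0
        rw [hay m hm, sub_self]
      have hmemk : mkQ π ay ∈ L π J k := by
        have hmem : mkQ π ay ∈ L π J n := ⟨ay, y, rfl, hyJ, hKp1⟩
        rcases le_or_gt n N with h | h
        · rwa [hk_def, min_eq_left h]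
        · rw [hk_def, min_eq_right h.le]
          have : L π J N = L π J n := hN n h.le
          rwa [this]
      obtain ⟨co, hco⟩ := span_lift (ι := ℕ × A × piAdicCompletion (A := A) π)
        (T.filter fun τ => τ.1 = k) (fun τ => τ.2.1)
        (hTspan k hkN hmemk)
      refine ⟨fun τ => c τ + if τ.1 = k then Pel π ^ (n - k) * psi π (co τ) else 0, ?_, ?_⟩
      · -- new invariant
        set S1 : A := ∑ τ ∈ T.filter (fun τ => τ.1 = k), co τ * τ.2.1 with hS1_def
        set W : piAdicCompletion (A := A) π :=
          ∑ τ ∈ T.filter (fun τ => τ.1 = k), psi π (co τ) * τ.2.2 with hW_def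
        have hmain : ∀ (x t : piAdicCompletion (A := A) π),
            Pel π ^ (n - k) * x * (Pel π ^ k * t) = Pel π ^ n * (x * t) := by
          intro x t
          rw [mul_assoc, ← mul_assoc x, ← Pel_pow_comm k x, mul_assoc (Pel π ^ k),
            ← mul_assoc, ← pow_add, Nat.sub_add_cancel hkn]
        have hsum : ∑ τ ∈ T, (if τ.1 = k then Pel π ^ (n - k) * psi π (co τ) else 0) * gen τ
            = Pel π ^ n * W := by
          rw [Finset.sum_congr rfl (fun τ _ => ite_zero_mul (τ.1 = k)
            (Pel π ^ (n - k) * psi π (co τ)) (gen τ)), ← Finset.sum_filter, hW_def,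
            Finset.mul_sum]
          refine Finset.sum_congr rfl fun τ hτ => ?_
          have hτ1 : τ.1 = k := by
            simpa using (Finset.mem_filter.mp hτ).2
          simp only [hgen_def, hτ1]
          exact hmain (psi π (co τ)) τ.2.2
        have hKpW : Kp π 1 (y - W) := by
          have h1 : Kp π 1 (psi π ay - psi π S1) := Kp_one_of_mkQ_eq hco
          have h2 : Kp π 1 (psi π S1 - W) := by
            have hps : psi π S1
                = ∑ τ ∈ T.filter (fun τ => τ.1 = k), psi π (co τ) * psi π τ.2.1 := by
              rw [hS1_def, map_sum]
              exact Finset.sum_congr rfl fun τ _ => map_mul _ _ _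
            rw [hps, hW_def, ← Finset.sum_sub_distrib]
            refine Kp.sum fun τ hτ => ?_
            rw [← mul_sub]
            refine Kp.mul_left ?_ _
            have h4 := ((hT τ (Finset.mem_filter.mp hτ).1).2.2).neg
            rwa [neg_sub] at h4
          have h3 : y - W = (y - psi π ay) + ((psi π ay - psi π S1) + (psi π S1 - W)) := by
            abel
          rw [h3]
          exact hKp1.add (h1.add h2)
        obtain ⟨w, hw⟩ := hKpW.exists_pow_mul
        refine ⟨w, ?_⟩
        have expand : ∀ τ, (c τ + if τ.1 = k then Pel π ^ (n - k) * psi π (co τ) else 0) * gen τ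
            = c τ * gen τ + (if τ.1 = k then Pel π ^ (n - k) * psi π (co τ) else 0) * gen τ :=
          fun τ => add_mul _ _ _
        rw [Finset.sum_congr rfl (fun τ _ => expand τ), Finset.sum_add_distrib, hsum,
          ← sub_sub, hy, ← mul_sub, hw, pow_one, ← mul_assoc, ← pow_succ]
      · -- increment bound
        intro τ
        rw [add_sub_cancel_left]
        by_cases h : τ.1 = k
        · rw [if_pos h]
          exact (Kp_pow_mul (n - k) _).mono (by omega)
        · rw [if_neg h]
          exact Kp.zero _
    obtain ⟨cs, hcs0, hcsP, hcsQ⟩ := nat_rec_choice Inv _ (fun _ => 0)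
      ⟨j, by simp⟩ step
    have hlim : ∀ τ, ∃ U, ∀ n, Kp π n (U - cs (n + N) τ) := by
      intro τ
      refine complete (fun n => cs (n + N) τ) (fun n => ?_)
      have h5 := hcsQ (n + N) τ
      rw [Nat.add_sub_cancel] at h5
      have h6 : n + N + 1 = n + 1 + N := by omega
      rw [h6] at h5
      exact h5
    choose U hU using hlim
    have hfinal : j = ∑ τ ∈ T, U τ * gen τ := by
      apply eq_of_forall_Kp
      intro n
      have e : j - ∑ τ ∈ T, U τ * gen τ
          = (j - ∑ τ ∈ T, cs (n + N) τ * gen τ)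
            + ∑ τ ∈ T, (cs (n + N) τ - U τ) * gen τ := by
        rw [Finset.sum_congr rfl (fun τ _ => sub_mul (cs (n + N) τ) (U τ) (gen τ)),
          Finset.sum_sub_distrib]
        abel
      rw [e]
      obtain ⟨y, hy⟩ := hcsP (n + N)
      refine Kp.add ?_ (Kp.sum fun τ hτ => ?_)
      · rw [hy]
        exact (Kp_pow_mul (n + N) y).mono (by omega)
      · refine Kp.mul_right ?_ (gen τ)
        have h7 := (hU τ n).neg
        rwa [neg_sub] at h7
    rw [hfinal]
    refine Submodule.sum_mem _ fun τ hτ => ?_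
    have h8 := Submodule.smul_mem (Ideal.span (↑(T.image gen) : Set _)) (U τ)
      (Submodule.subset_span (Finset.mem_coe.mpr (Finset.mem_image.mpr ⟨τ, hτ, rfl⟩)))
    rwa [smul_eq_mul] at h8

end Berthelot
/-- **Berthelot's Lemma 3.2.2.**  Let `R` be a commutative Noetherian ring with an element
`π`, and let `A` be an `R`-algebra such that `A/πA` is Noetherian.  Then the `π`-adic
completion `lim_n A/πⁿA` of `A` is Noetherian. -/
theorem adic_completion_noetherian [IsNoetherianRing R] (π : R)
    (hmod : IsNoetherianRing
      (modCon (algebraMap R A π) fun a => (Algebra.commutes π a).symm).Quotient) :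
    IsNoetherianRing (piAdicCompletion (A := A) π) := by
  rw [isNoetherianRing_iff_ideal_fg]
  intro J
  exact Berthelot.ideal_fg hmod J
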